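/- Let G be a binom(d,ℓ)-partite uniform hypergraph with parts V_I indexed by ℓ-subsets I of [d], where ℓ ≤ d−1. Then G is representable as a set of distinct points in ℝ^d covered by distinct axis-aligned affine ℓ-dimensional subspaces (part V_I represented by subspaces whose free coordinates are exactly those in I), with hypergraph incidence coinciding with geometric incidence, if and only if G is vertex-separable, i.e., for all distinct v, v' in the same part V_I there exists j ∈ [d] \ I such that every v–v' path contains a vertex in some part V_J with j ∈ J. -/

import Mathlib

/-- A `binom(d,ℓ)`-partite uniform hypergraph: parts indexed by the `ℓ`-element subsets
of `[d]`, each hyperedge containing exactly one vertex of each part. -/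
structure DLHypergraph (d l : ℕ) (V E : Type) where
  part : V → {I : Finset (Fin d) // I.card = l}
  vert : E → {I : Finset (Fin d) // I.card = l} → V
  hpart : ∀ e I, part (vert e I) = I

namespace DLHypergraph

variable {d l : ℕ} {V E : Type}

/-- Vertex `v` belongs to hyperedge `e`. -/
def Mem (G : DLHypergraph d l V E) (v : V) (e : E) : Prop :=
  G.vert e (G.part v) = v

/-- Two vertices are adjacent if they are both contained in a common hyperedge. -/
def Adj (G : DLHypergraph d l V E) (u v : V) : Prop :=
  ∃ e : E, G.Mem u e ∧ G.Mem v e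

/-- `l` is an `s`–`t` path. -/
def IsPath (G : DLHypergraph d l V E) (s t : V) (L : List V) : Prop :=
  L.Chain' G.Adj ∧ L.head? = some s ∧ L.getLast? = some t

/-- Vertex separability: for distinct `v, v'` in the same part `V_I` there is a
coordinate `j ∉ I` such that every `v`–`v'` path contains a vertex in some part `V_J`
with `j ∈ J`. -/
def VertexSeparable (G : DLHypergraph d l V E) : Prop :=
  ∀ v v' : V, v ≠ v' → G.part v = G.part v' →
    ∃ j : Fin d, j ∉ (G.part v).val ∧
      ∀ L : List V, G.IsPath v v' L → ∃ w ∈ L, j ∈ (G.part w).val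

/-- Edge separability: for distinct hyperedges `e, e'` there is a coordinate `j` such
that every `e`–`e'` path contains a vertex in some part `V_J` with `j ∈ J`. -/
def EdgeSeparable (G : DLHypergraph d l V E) : Prop :=
  ∀ e e' : E, G.vert e ≠ G.vert e' →
    ∃ j : Fin d, ∀ (v v' : V) (L : List V), G.Mem v e → G.Mem v' e' →
      G.IsPath v v' L → ∃ w ∈ L, j ∈ (G.part w).val

/-- The axis-aligned affine `ℓ`-subspace of `ℝ^d` representing vertex `v`: coordinates
in the free set `G.part v` are free, all other coordinates are fixed to values of `C v`. -/
def subspaceOf (G : DLHypergraph d l V E) (C : V → Fin d → ℝ) (v : V) : Set (Fin d → ℝ) :=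
  {x | ∀ j : Fin d, j ∉ (G.part v).val → x j = C v j}

/-- `(p, C)` is a point subspace cover representation of `G` in `ℝ^d`: hyperedges map
to pairwise distinct points, vertices to pairwise distinct axis-aligned `ℓ`-subspaces
(part `V_I` to subspaces with free coordinate set `I`), preserving and reflecting
incidence. -/
def Represents (G : DLHypergraph d l V E) (p : E → Fin d → ℝ) (C : V → Fin d → ℝ) : Prop :=
  Function.Injective p ∧
  (∀ v v' : V, v ≠ v' → G.subspaceOf C v ≠ G.subspaceOf C v') ∧
  (∀ (v : V) (e : E), G.Mem v e ↔ p e ∈ G.subspaceOf C v)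

end DLHypergraph


namespace DLHypergraph

variable {d l : ℕ} {V E : Type} {G : DLHypergraph d l V E}

lemma adj_symm {u v : V} (h : G.Adj u v) : G.Adj v u := by
  obtain ⟨e, h1, h2⟩ := h; exact ⟨e, h2, h1⟩

/-- There is a `v`–`v'` path all of whose vertices avoid coordinate `j`. -/
def Avoid (G : DLHypergraph d l V E) (j : Fin d) (v v' : V) : Prop :=
  ∃ L : List V, G.IsPath v v' L ∧ ∀ w ∈ L, j ∉ (G.part w).val

lemma avoid_refl {j : Fin d} {v : V} (h : j ∉ (G.part v).val) : G.Avoid j v v :=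
  ⟨[v], ⟨List.isChain_singleton _, rfl, rfl⟩, by simpa using h⟩

lemma avoid_symm {j : Fin d} {v v' : V} (h : G.Avoid j v v') : G.Avoid j v' v := by
  obtain ⟨L, ⟨hc, hh, hl⟩, ha⟩ := h
  refine ⟨L.reverse, ⟨?_, ?_, ?_⟩, fun w hw => ha w (List.mem_reverse.mp hw)⟩
  · unfold List.Chain' at hc ⊢; rw [List.isChain_reverse]; exact hc.imp fun a b hab => adj_symm hab
  · rw [List.head?_reverse]; exact hl
  · rw [List.getLast?_reverse]; exact hh

lemma avoid_extend {j : Fin d} {v v' b : V} (h : G.Avoid j v v') (hadj : G.Adj v' b)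
    (hb : j ∉ (G.part b).val) : G.Avoid j v b := by
  obtain ⟨L, ⟨hc, hh, hl⟩, ha⟩ := h
  refine ⟨L ++ [b], ⟨?_, ?_, ?_⟩, ?_⟩
  · unfold List.Chain' at hc ⊢; rw [List.isChain_append]
    refine ⟨hc, List.isChain_singleton _, fun x hx y hy => ?_⟩
    simp only [List.head?_cons, Option.mem_def, Option.some.injEq] at hy
    rw [Option.mem_def, hl, Option.some.injEq] at hx
    rw [← hx, ← hy]; exact hadj
  · cases L with
    | nil => simp at hh
    | cons a t => simpa using hh
  · exact List.getLast?_concat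
  · intro w hw
    rcases List.mem_append.mp hw with h1 | h1
    · exact ha w h1
    · simp only [List.mem_singleton] at h1; exact h1 ▸ hb

lemma avoid_trans_aux {j : Fin d} {v : V} (L : List V) :
    ∀ (v' v'' : V), G.Avoid j v v' → L.Chain' G.Adj → L.head? = some v' →
      L.getLast? = some v'' → (∀ w ∈ L, j ∉ (G.part w).val) → G.Avoid j v v'' := by
  induction L with
  | nil => intro v' v'' _ _ h; simp at h
  | cons a t ih =>
    intro v' v'' h1 hc hh hl ha
    simp only [List.head?_cons, Option.some.injEq] at hh
    subst hh
    cases t with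
    | nil =>
      simp only [List.getLast?_singleton, Option.some.injEq] at hl
      exact hl ▸ h1
    | cons b t2 =>
      unfold List.Chain' at hc; rw [List.isChain_cons_cons] at hc
      rw [List.getLast?_cons_cons] at hl
      exact ih b v'' (avoid_extend h1 hc.1 (ha b (by simp))) hc.2 rfl hl
        (fun w hw => ha w (List.mem_cons_of_mem _ hw))

lemma avoid_trans {j : Fin d} {a b c : V} (h1 : G.Avoid j a b) (h2 : G.Avoid j b c) :
    G.Avoid j a c := by
  obtain ⟨L, ⟨hc, hh, hl⟩, ha⟩ := h2
  exact avoid_trans_aux L b c h1 hc hh hl ha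

lemma const_along {p : E → Fin d → ℝ} {C : V → Fin d → ℝ}
    (hmem : ∀ (v : V) (e : E), G.Mem v e ↔ p e ∈ G.subspaceOf C v) {j : Fin d} :
    ∀ (L : List V), L.Chain' G.Adj → (∀ w ∈ L, j ∉ (G.part w).val) →
      ∀ a b, L.head? = some a → L.getLast? = some b → C a j = C b j := by
  intro L
  induction L with
  | nil => intro _ _ a b h; simp at h
  | cons x t ih =>
    intro hc ha a b hh hl
    simp only [List.head?_cons, Option.some.injEq] at hh; subst hh
    cases t with
    | nil =>
      simp only [List.getLast?_singleton, Option.some.injEq] at hl; rw [hl]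
    | cons c t2 =>
      unfold List.Chain' at hc; rw [List.isChain_cons_cons] at hc
      rw [List.getLast?_cons_cons] at hl
      obtain ⟨e, he1, he2⟩ := hc.1
      have h1 := (hmem x e).mp he1 j (ha x (by simp))
      have h2 := (hmem c e).mp he2 j (ha c (by simp))
      rw [← h1, h2]
      exact ih hc.2 (fun w hw => ha w (List.mem_cons_of_mem _ hw)) c b rfl hl

end DLHypergraph

/-- A (finite) `binom(d,ℓ)`-partite uniform hypergraph with pairwise distinct
hyperedges and `ℓ ≤ d − 1` is representable as a point subspace cover instance in
`ℝ^d` (points covered by axis-aligned affine `ℓ`-subspaces, part `V_I` represented by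
subspaces with free coordinate set `I`) if and only if it is vertex-separable. -/
theorem stmt11 {d l : ℕ} {V E : Type} [Finite V] [Finite E] (hl : l ≤ d - 1)
    (G : DLHypergraph d l V E) (hdist : Function.Injective G.vert) :
    (∃ (p : E → Fin d → ℝ) (C : V → Fin d → ℝ), G.Represents p C) ↔
      G.VertexSeparable := by
  classical
  constructor
  · rintro ⟨p, C, hpinj, hdisj, hmem⟩ v v' hne hpartEq
    have hCne : ∃ j : Fin d, j ∉ (G.part v).val ∧ C v j ≠ C v' j := by
      by_contra hall
      push_neg at hall
      apply hdisj v v' hne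
      ext x
      simp only [DLHypergraph.subspaceOf, Set.mem_setOf_eq]
      constructor
      · intro h j hj
        have hj' : j ∉ (G.part v).val := by rw [hpartEq]; exact hj
        rw [← hall j hj']
        exact h j hj'
      · intro h j hj
        rw [hall j hj]
        exact h j (by rw [← hpartEq]; exact hj)
    obtain ⟨j, hjv, hCj⟩ := hCne
    refine ⟨j, hjv, fun L hL => ?_⟩
    by_contra hno
    push_neg at hno
    exact hCj (DLHypergraph.const_along hmem L hL.1 hno v v' hL.2.1 hL.2.2)
  · intro hsep
    obtain ⟨f, hf⟩ := exists_injective_nat (Set V)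
    set C : V → Fin d → ℝ := fun v j => (f {w | G.Avoid j v w} : ℝ) with hC
    have key : ∀ (j : Fin d) (a b : V), j ∉ (G.part a).val → j ∉ (G.part b).val →
        (C a j = C b j ↔ G.Avoid j a b) := by
      intro j a b hja hjb
      constructor
      · intro h
        rw [hC] at h
        have hs : {w | G.Avoid j a w} = {w | G.Avoid j b w} :=
          hf (Nat.cast_injective h)
        have hb : b ∈ {w | G.Avoid j b w} := DLHypergraph.avoid_refl hjb
        rw [← hs] at hb
        exact hb
      · intro h
        have hs : {w | G.Avoid j a w} = {w | G.Avoid j b w} := by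
          ext w
          exact ⟨fun hw => DLHypergraph.avoid_trans (DLHypergraph.avoid_symm h) hw,
                 fun hw => DLHypergraph.avoid_trans h hw⟩
        rw [hC]
        simp only [hs]
    have hIex : ∀ j : Fin d, ∃ I : Finset (Fin d), I.card = l ∧ j ∉ I := by
      intro j
      obtain ⟨t, ht, hcard⟩ := Finset.exists_subset_card_eq
        (s := Finset.univ.erase j) (n := l) (by
          rw [Finset.card_erase_of_mem (Finset.mem_univ j), Finset.card_univ,
            Fintype.card_fin]
          exact hl)
      exact ⟨t, hcard, fun hm => (Finset.mem_erase.mp (ht hm)).1 rfl⟩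
    choose If hIcard hInot using hIex
    set p : E → Fin d → ℝ := fun e j => C (G.vert e ⟨If j, hIcard j⟩) j with hp
    have hA : ∀ (v : V) (e : E) (j : Fin d), G.Mem v e → j ∉ (G.part v).val →
        p e j = C v j := by
      intro v e j hv hjv
      have hu : G.Mem (G.vert e ⟨If j, hIcard j⟩) e := by
        show G.vert e (G.part _) = _
        rw [G.hpart]
      have hju : j ∉ (G.part (G.vert e ⟨If j, hIcard j⟩)).val := by
        rw [G.hpart]; exact hInot j
      refine (key j _ v hju hjv).mpr ?_
      refine ⟨[G.vert e ⟨If j, hIcard j⟩, v],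
        ⟨List.isChain_pair.mpr ⟨e, hu, hv⟩, rfl, by simp⟩, ?_⟩
      intro w hw
      rcases List.mem_pair.mp hw with h | h <;> subst h
      · exact hju
      · exact hjv
    have hB : ∀ (v : V) (e : E), G.Mem v e ↔ p e ∈ G.subspaceOf C v := by
      intro v e
      constructor
      · intro hv j hj
        exact hA v e j hv hj
      · intro hx
        have hue : G.Mem (G.vert e (G.part v)) e := by
          show G.vert e (G.part _) = _
          rw [G.hpart]
        have hupart : G.part (G.vert e (G.part v)) = G.part v := G.hpart e (G.part v)
        by_contra hne'
        have hvu : v ≠ G.vert e (G.part v) := by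
          intro h
          exact hne' h.symm
        obtain ⟨j, hjv, hsep'⟩ := hsep v _ hvu hupart.symm
        have hju : j ∉ (G.part (G.vert e (G.part v))).val := by
          rw [hupart]; exact hjv
        have h1 : p e j = C v j := hx j hjv
        have h2 : p e j = C (G.vert e (G.part v)) j := hA _ e j hue hju
        obtain ⟨L, hL, hno⟩ := (key j v _ hjv hju).mp (h1.symm.trans h2)
        obtain ⟨w, hwL, hjw⟩ := hsep' L hL
        exact hno w hwL hjw
    have hD : ∀ v v' : V, v ≠ v' → G.subspaceOf C v ≠ G.subspaceOf C v' := by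
      intro v v' hne heq
      by_cases hpp : G.part v = G.part v'
      · obtain ⟨j, hjv, hsep'⟩ := hsep v v' hne hpp
        have hjv' : j ∉ (G.part v').val := by rw [← hpp]; exact hjv
        have hCne2 : C v j ≠ C v' j := by
          intro h
          obtain ⟨L, hL, hno⟩ := (key j v v' hjv hjv').mp h
          obtain ⟨w, hwL, hjw⟩ := hsep' L hL
          exact hno w hwL hjw
        have hx : (fun i => if i ∈ (G.part v).val then (0:ℝ) else C v i)
            ∈ G.subspaceOf C v := by
          simp only [DLHypergraph.subspaceOf, Set.mem_setOf_eq]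
          intro i hi
          simp [hi]
        rw [heq] at hx
        have h1 : C v j = C v' j := by simpa [hjv] using hx j hjv'
        exact hCne2 h1
      · have hcards : ((G.part v).val).card = ((G.part v').val).card := by
          rw [(G.part v).prop, (G.part v').prop]
        have hnsub : ¬ (G.part v).val ⊆ (G.part v').val := by
          intro hsub
          exact hpp (Subtype.ext (Finset.eq_of_subset_of_card_le hsub hcards.ge))
        obtain ⟨j0, hj0v, hj0v'⟩ := Finset.not_subset.mp hnsub
        have hx : (fun i => if i ∈ (G.part v).val then C v' i + 1 else C v i)
            ∈ G.subspaceOf C v := by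
          simp only [DLHypergraph.subspaceOf, Set.mem_setOf_eq]
          intro i hi
          simp [hi]
        rw [heq] at hx
        have h1 : C v' j0 + 1 = C v' j0 := by simpa [hj0v] using hx j0 hj0v'
        linarith
    have hpinj : Function.Injective p := by
      intro e e' h
      apply hdist
      funext I
      have hv : G.Mem (G.vert e I) e := by
        show G.vert e (G.part _) = _
        rw [G.hpart]
      have h1 : p e ∈ G.subspaceOf C (G.vert e I) := (hB _ e).mp hv
      rw [h] at h1
      have h2 : G.Mem (G.vert e I) e' := (hB _ e').mpr h1
      rw [← h2, G.hpart]
    exact ⟨p, C, hpinj, hD, fun v e => hB v e⟩
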